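/- If ρ = Σ_{i=1}^m |ψ_i⟩⟨ψ_i| where the (unnormalized) vectors |ψ_i⟩ are linearly independent, and Ψ is the matrix with columns |ψ_i⟩, then for any unitary U = (U₁ U₂) partitioned into column blocks, the matrices ρ₁ = Ψ U₁ U₁† Ψ† and ρ₂ = Ψ U₂ U₂† Ψ† are positive semidefinite, satisfy ρ₁ + ρ₂ = ρ, supp(ρ₁) = span(Ψ U₁), supp(ρ₂) = span(Ψ U₂), and supp(ρ₁) ∩ supp(ρ₂) = {0}. -/
import Mathlib


open Matrix BigOperators ComplexOrder

/-- Column space of a matrix: the range of the associated linear map `x ↦ A *ᵥ x`. -/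
noncomputable def colSpace {n m : ℕ} (A : Matrix (Fin n) (Fin m) ℂ) :
    Submodule ℂ (Fin n → ℂ) :=
  LinearMap.range A.mulVecLin

/-- Support of a square matrix (for a PSD matrix, the orthocomplement of the kernel,
which equals its column space). -/
noncomputable def supp {n : ℕ} (A : Matrix (Fin n) (Fin n) ℂ) : Submodule ℂ (Fin n → ℂ) :=
  LinearMap.range A.mulVecLin

lemma supp_mul_conjTranspose {n m : ℕ} (A : Matrix (Fin n) (Fin m) ℂ) :
    supp (A * Aᴴ) = colSpace A := by
  have hle : supp (A * Aᴴ) ≤ colSpace A := by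
    rw [supp, colSpace, Matrix.mulVecLin_mul]
    exact LinearMap.range_comp_le_range _ _
  refine Submodule.eq_of_le_of_finrank_eq hle ?_
  have := Matrix.rank_self_mul_conjTranspose A
  rw [Matrix.rank, Matrix.rank] at this
  exact this

theorem stmt_2 {n k l : ℕ} (Ψ : Matrix (Fin n) (Fin (k + l)) ℂ)
    (hlin : LinearIndependent ℂ (fun j : Fin (k + l) => fun i : Fin n => Ψ i j))
    (ρ : Matrix (Fin n) (Fin n) ℂ) (hρ : ρ = Ψ * Ψᴴ)
    (U : Matrix (Fin (k + l)) (Fin (k + l)) ℂ)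
    (hU : U ∈ Matrix.unitaryGroup (Fin (k + l)) ℂ)
    (U₁ : Matrix (Fin (k + l)) (Fin k) ℂ) (U₂ : Matrix (Fin (k + l)) (Fin l) ℂ)
    (hU₁ : U₁ = U.submatrix id (Fin.castAdd l))
    (hU₂ : U₂ = U.submatrix id (Fin.natAdd k))
    (ρ₁ ρ₂ : Matrix (Fin n) (Fin n) ℂ)
    (hρ₁ : ρ₁ = Ψ * U₁ * U₁ᴴ * Ψᴴ) (hρ₂ : ρ₂ = Ψ * U₂ * U₂ᴴ * Ψᴴ) :
    ρ₁.PosSemidef ∧ ρ₂.PosSemidef ∧ ρ₁ + ρ₂ = ρ ∧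
    supp ρ₁ = colSpace (Ψ * U₁) ∧ supp ρ₂ = colSpace (Ψ * U₂) ∧
    supp ρ₁ ⊓ supp ρ₂ = ⊥ := by
  have hρ₁' : ρ₁ = (Ψ * U₁) * (Ψ * U₁)ᴴ := by
    rw [hρ₁, Matrix.conjTranspose_mul, ← Matrix.mul_assoc]
  have hρ₂' : ρ₂ = (Ψ * U₂) * (Ψ * U₂)ᴴ := by
    rw [hρ₂, Matrix.conjTranspose_mul, ← Matrix.mul_assoc]
  have hUU : U * Uᴴ = 1 := (Matrix.mem_unitaryGroup_iff).mp hU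
  have hUU' : Uᴴ * U = 1 := (Matrix.mem_unitaryGroup_iff').mp hU
  -- block identities
  have h11 : U₁ᴴ * U₁ = 1 := by
    rw [hU₁, Matrix.conjTranspose_submatrix,
      ← Matrix.submatrix_mul Uᴴ U (Fin.castAdd l) id (Fin.castAdd l) Function.bijective_id,
      hUU', Matrix.submatrix_one _ (Fin.castAdd_injective k l)]
  have h12 : U₁ᴴ * U₂ = 0 := by
    rw [hU₁, hU₂, Matrix.conjTranspose_submatrix,
      ← Matrix.submatrix_mul Uᴴ U (Fin.castAdd l) id (Fin.natAdd k) Function.bijective_id,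
      hUU']
    ext a b
    have hne : (Fin.castAdd l a : Fin (k + l)) ≠ Fin.natAdd k b := by
      intro h
      have := congrArg Fin.val h
      simp only [Fin.coe_castAdd, Fin.coe_natAdd] at this
      omega
    simp [Matrix.one_apply_ne hne]
  have hsum : U₁ * U₁ᴴ + U₂ * U₂ᴴ = 1 := by
    rw [← hUU]
    ext i j
    simp only [Matrix.add_apply, Matrix.mul_apply, hU₁, hU₂,
      Matrix.conjTranspose_apply, Matrix.submatrix_apply, id_eq]
    rw [Fin.sum_univ_add (fun p : Fin (k + l) => U i p * star (U j p))]
  -- injectivity of Ψ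
  have hinj : Function.Injective Ψ.mulVec := by
    rw [Matrix.mulVec_injective_iff]
    exact hlin
  refine ⟨hρ₁' ▸ Matrix.posSemidef_self_mul_conjTranspose _,
    hρ₂' ▸ Matrix.posSemidef_self_mul_conjTranspose _, ?_, ?_, ?_, ?_⟩
  · rw [hρ₁, hρ₂, hρ, Matrix.mul_assoc Ψ U₁ U₁ᴴ, Matrix.mul_assoc Ψ U₂ U₂ᴴ,
      ← Matrix.add_mul, ← Matrix.mul_add, hsum, Matrix.mul_one]
  · rw [hρ₁']; exact supp_mul_conjTranspose _
  · rw [hρ₂']; exact supp_mul_conjTranspose _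
  · rw [hρ₁', hρ₂', supp_mul_conjTranspose, supp_mul_conjTranspose]
    rw [eq_bot_iff]
    rintro x ⟨⟨a, ha⟩, ⟨b, hb⟩⟩
    simp only [Matrix.mulVecLin_apply] at ha hb
    have hab : U₁ *ᵥ a = U₂ *ᵥ b := by
      apply hinj
      rw [Matrix.mulVec_mulVec, Matrix.mulVec_mulVec, ha, hb]
    have ha0 : a = 0 := by
      have := congrArg (fun v => U₁ᴴ *ᵥ v) hab
      simpa [Matrix.mulVec_mulVec, h11, h12] using this
    rw [← ha, ha0]
    simp
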